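/- arXiv:1703.09631 — 2 statements merged into one kernel-verified Lean document; each statement's English description precedes it below -/
import Mathlib

section
/- Let the columns of a matrix X ∈ ℝ^{n×s} belong to an affine subspace A ⊆ ℝ^n of dimension r. Then the rank of the lifted matrix φ_d(X) is at most binomial(r+d, d) for every d ≥ 1. -/
open Finset

noncomputable instance instFintypeBddSum (r d : ℕ) : Fintype {β : Fin r → ℕ // ∑ i, β i ≤ d} :=
  Fintype.ofInjective
    (fun β => (fun i => (⟨β.1 i, Nat.lt_succ_of_le
      (le_trans (Finset.single_le_sum (fun i _ => Nat.zero_le _) (Finset.mem_univ i)) β.2)⟩ :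
        Fin (d+1)) : Fin r → Fin (d+1)))
    (fun β γ h => Subtype.ext (funext fun i => congrArg Fin.val (congrFun h i)))

/-- Splitting off the first coordinate. -/
def splitEquivBdd (r d : ℕ) :
    {β : Fin (r+1) → ℕ // ∑ i, β i ≤ d} ≃
      Σ a : Fin (d+1), {β : Fin r → ℕ // ∑ i, β i ≤ d - a.1} where
  toFun β := ⟨⟨β.1 0, Nat.lt_succ_of_le (le_trans
      (Finset.single_le_sum (fun i _ => Nat.zero_le _) (Finset.mem_univ 0)) β.2)⟩,
    ⟨Fin.tail β.1, by
      have h := β.2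
      rw [Fin.sum_univ_succ] at h
      simp only [Fin.tail]
      omega⟩⟩
  invFun p := ⟨Fin.cons p.1.1 p.2.1, by
    rw [Fin.sum_univ_succ]
    simp only [Fin.cons_zero, Fin.cons_succ]
    have h1 := p.2.2
    have h2 := p.1.isLt
    omega⟩
  left_inv β := Subtype.ext (Fin.cons_self_tail β.1)
  right_inv p := by
    rcases p with ⟨a, β⟩
    simp only [Fin.cons_zero, Fin.tail_cons]
    rfl

lemma card_bddSum : ∀ r d : ℕ, Fintype.card {β : Fin r → ℕ // ∑ i, β i ≤ d} = (r + d).choose d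
  | 0, d => by
    rw [Fintype.card_eq_one_iff.mpr ⟨⟨fun i => 0, by simp⟩,
      fun y => Subtype.ext (funext fun i => i.elim0)⟩]
    simp
  | (r+1), d => by
    rw [Fintype.card_congr (splitEquivBdd r d), Fintype.card_sigma]
    have h1 : ∀ a : Fin (d+1), Fintype.card {β : Fin r → ℕ // ∑ i, β i ≤ d - a.1}
        = (r + (d - a.1)).choose (d - a.1) := fun a => card_bddSum r (d - a.1)
    rw [Finset.sum_congr rfl fun a _ => h1 a]
    rw [Fin.sum_univ_eq_sum_range (fun k => (r + (d - k)).choose (d - k)) (d+1)]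
    have h2 : ∀ k ∈ Finset.range (d+1), (r + (d - k)).choose (d - k) = (r + (d-k)).choose r := by
      intro k _
      rw [Nat.add_comm r (d - k)]
      exact Nat.choose_symm_add
    rw [Finset.sum_congr rfl h2]
    have h3 := Finset.sum_range_reflect (fun k => (r + k).choose r) (d + 1)
    simp only [Nat.add_sub_cancel] at h3
    rw [h3]
    have h4 : ∑ k ∈ Finset.range (d+1), (r + k).choose r = ∑ m ∈ Finset.Icc r (r + d), m.choose r := by
      rw [← Finset.Ico_add_one_right_eq_Icc, Finset.sum_Ico_eq_sum_range]
      have h5 : r + d + 1 - r = d + 1 := by omega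
      rw [h5]
    rw [h4, Nat.sum_Icc_choose]
    have h6 : r + 1 + d = d + (r + 1) := by omega
    rw [h6, Nat.choose_symm_add]
    congr 1
    omega

/-- The monomial feature ("lifting") matrix `φ_d(X)`: its rows are indexed by the
multi-indices `α` with `|α| ≤ d`, and its `(α, j)` entry is the monomial `x_j^α`,
where `x_j` is the `j`-th column of `X`. -/
def phiMatrix {n s : ℕ} (d : ℕ) (X : Matrix (Fin n) (Fin s) ℝ) :
    Matrix {α : Fin n → ℕ // ∑ i, α i ≤ d} (Fin s) ℝ :=
  Matrix.of fun α j => ∏ i, X i j ^ α.1 i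

/-- If the columns of `X ∈ ℝ^{n×s}` belong to an affine subspace of dimension `r`
(a translate `b + W` of a linear subspace `W` with `dim W = r`), then for every `d ≥ 1`
the rank of the lifted matrix `φ_d(X)` is at most `(r+d).choose d`. -/
theorem rank_phiMatrix_le_of_affine (n s d r : ℕ) (hd : 1 ≤ d)
    (W : Submodule ℝ (Fin n → ℝ)) (hW : Module.finrank ℝ W = r) (b : Fin n → ℝ)
    (X : Matrix (Fin n) (Fin s) ℝ)
    (hX : ∀ j, ∃ w ∈ W, (fun i => X i j) = w + b) :
    (phiMatrix d X).rank ≤ (r + d).choose d := by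
  classical
  let v : Module.Basis (Fin r) ℝ W := Module.finBasisOfFinrankEq ℝ W hW
  choose w hwW hw using hX
  let Cmat : Matrix (Fin r) (Fin s) ℝ := fun k j => v.repr ⟨w j, hwW j⟩ k
  have hXexp : ∀ i j, X i j = b i + ∑ k, Cmat k j * (v k : Fin n → ℝ) i := by
    intro i j
    have h1 : w j = ∑ k, Cmat k j • ((v k : W) : Fin n → ℝ) := by
      have h := congrArg (Subtype.val : W → Fin n → ℝ) (v.sum_repr ⟨w j, hwW j⟩)
      have h' := h.symm
      simp only [Submodule.coe_sum, Submodule.coe_smul] at h'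
      exact h'
    have h2 : X i j = w j i + b i := congrFun (hw j) i
    rw [h2, congrFun h1 i]
    simp [Finset.sum_apply]
    ring
  -- the polynomials
  let q : Fin n → MvPolynomial (Fin r) ℝ := fun i =>
    MvPolynomial.C (b i) + ∑ k, MvPolynomial.C ((v k : Fin n → ℝ) i) * MvPolynomial.X k
  let P : (Fin n → ℕ) → MvPolynomial (Fin r) ℝ := fun α => ∏ i, q i ^ α i
  have hq : ∀ i, (q i).totalDegree ≤ 1 := by
    intro i
    refine le_trans (MvPolynomial.totalDegree_add _ _) (max_le (by simp) ?_)
    refine le_trans (MvPolynomial.totalDegree_finset_sum _ _) (Finset.sup_le fun k _ => ?_)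
    refine le_trans (MvPolynomial.totalDegree_mul _ _) ?_
    simp [MvPolynomial.totalDegree_X]
  have hdeg : ∀ α : Fin n → ℕ, (P α).totalDegree ≤ ∑ i, α i := by
    intro α
    refine le_trans (MvPolynomial.totalDegree_finset_prod _ _) (Finset.sum_le_sum fun i _ => ?_)
    refine le_trans (MvPolynomial.totalDegree_pow _ _) ?_
    calc α i * (q i).totalDegree ≤ α i * 1 := Nat.mul_le_mul_left _ (hq i)
      _ = α i := Nat.mul_one _
  have heval : ∀ (α : Fin n → ℕ) j,
      MvPolynomial.eval (fun k => Cmat k j) (P α) = ∏ i, X i j ^ α i := by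
    intro α j
    simp only [P, q, map_prod, map_pow, map_add, map_sum, map_mul,
      MvPolynomial.eval_C, MvPolynomial.eval_X]
    refine Finset.prod_congr rfl fun i _ => ?_
    rw [hXexp i j]
    simp [mul_comm]
  -- the key sum identity
  have key : ∀ (p : MvPolynomial (Fin r) ℝ), p.totalDegree ≤ d → ∀ f : Fin r → ℝ,
      (∑ β : {β : Fin r → ℕ // ∑ i, β i ≤ d},
        p.coeff (Finsupp.equivFunOnFinite.symm β.1) * ∏ k, f k ^ β.1 k)
      = MvPolynomial.eval f p := by
    intro p hp f
    rw [MvPolynomial.eval_eq']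
    have hinj : Function.Injective
        (fun β : {β : Fin r → ℕ // ∑ i, β i ≤ d} => Finsupp.equivFunOnFinite.symm β.1) :=
      fun β γ h => Subtype.ext (Finsupp.equivFunOnFinite.symm.injective h)
    set s' : Finset (Fin r →₀ ℕ) := Finset.univ.map ⟨_, hinj⟩ with hs'
    have hmem : ∀ m : Fin r →₀ ℕ, m ∈ s' ↔ ∑ i, m i ≤ d := by
      intro m
      simp only [hs', Finset.mem_map, Finset.mem_univ, true_and, Function.Embedding.coeFn_mk]
      constructor
      · rintro ⟨β, rfl⟩
        simpa using β.2
      · intro hm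
        exact ⟨⟨m, hm⟩, by simp⟩
    have h1 : (∑ β : {β : Fin r → ℕ // ∑ i, β i ≤ d},
        p.coeff (Finsupp.equivFunOnFinite.symm β.1) * ∏ k, f k ^ β.1 k)
        = ∑ m ∈ s', p.coeff m * ∏ k, f k ^ m k := by
      rw [hs', Finset.sum_map]
      exact Finset.sum_congr rfl fun β _ => by simp
    rw [h1]
    refine (Finset.sum_subset ?_ ?_).symm
    · intro m hm
      rw [hmem]
      have h2 : (m.sum fun _ e => e) ≤ p.totalDegree := MvPolynomial.le_totalDegree hm
      have h3 : (m.sum fun _ e => e) = ∑ i, m i := Finsupp.sum_fintype _ _ (fun _ => rfl)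
      omega
    · intro m _ hm
      rw [MvPolynomial.notMem_support_iff.mp hm, zero_mul]
  -- the coefficient matrix
  let A : Matrix {α : Fin n → ℕ // ∑ i, α i ≤ d} {β : Fin r → ℕ // ∑ i, β i ≤ d} ℝ :=
    fun α β => (P α.1).coeff (Finsupp.equivFunOnFinite.symm β.1)
  have hfac : phiMatrix d X = A * phiMatrix d Cmat := by
    ext α j
    rw [Matrix.mul_apply]
    simp only [Matrix.mul_apply, phiMatrix, Matrix.of_apply, A]
    rw [key (P α.1) (le_trans (hdeg α.1) α.2) (fun k => Cmat k j), heval]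
  calc (phiMatrix d X).rank = (A * phiMatrix d Cmat).rank := by rw [hfac]
    _ ≤ (phiMatrix d Cmat).rank := Matrix.rank_mul_le_right _ _
    _ ≤ Fintype.card {β : Fin r → ℕ // ∑ i, β i ≤ d} := Matrix.rank_le_card_height _
    _ = (r + d).choose d := card_bddSum r d
end

section
/- Let the columns of X ∈ ℝ^{n×s} belong to a union of k affine subspaces A_1,...,A_k, each of dimension at most r. Then rank φ_d(X) ≤ k · binomial(r+d, d) for all d ≥ 1. -/
open MvPolynomial Module Submodule Matrix

/-- Adding a slack variable: nonneg integer tuples with sum at most `d` correspond to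
tuples with one more coordinate with sum exactly `d`. -/
def slackEquiv (m d : ℕ) :
    {β : Fin m → ℕ // ∑ i, β i ≤ d} ≃ {P : Fin (m + 1) → ℕ // ∑ i, P i = d} where
  toFun β := ⟨Fin.cons (d - ∑ i, β.1 i) β.1, by
    rw [Fin.sum_univ_succ]
    simp only [Fin.cons_zero, Fin.cons_succ]
    have := β.2; omega⟩
  invFun P := ⟨fun l => P.1 l.succ, by
    show ∑ i : Fin m, P.1 i.succ ≤ d
    have := P.2; rw [Fin.sum_univ_succ] at this; omega⟩
  left_inv β := by ext l; simp
  right_inv P := by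
    ext l
    refine Fin.cases ?_ (fun l => ?_) l
    · have := P.2; rw [Fin.sum_univ_succ] at this
      simp only [Fin.cons_zero]; omega
    · simp

noncomputable instance sumLEFintype (m d : ℕ) : Fintype {β : Fin m → ℕ // ∑ i, β i ≤ d} :=
  Fintype.ofEquiv (Sym (Fin (m + 1)) d)
    ((slackEquiv m d).trans (Sym.equivNatSumOfFintype (Fin (m + 1)) d).symm).symm

lemma card_sumLE (m d : ℕ) :
    Fintype.card {β : Fin m → ℕ // ∑ i, β i ≤ d} = (m + d).choose d := by
  rw [Fintype.card_congr ((slackEquiv m d).trans (Sym.equivNatSumOfFintype (Fin (m + 1)) d).symm)]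
  rw [Sym.card_sym_fin_eq_multichoose, Nat.multichoose_eq]
  congr 1
  omega

/-- The polynomial in `m` variables obtained by substituting `b + ∑ c l • E l` into the
monomial with exponent vector `α`. -/
noncomputable def affMonomial {n : ℕ} (m : ℕ) (b : Fin n → ℝ) (E : Fin m → Fin n → ℝ)
    (α : Fin n → ℕ) : MvPolynomial (Fin m) ℝ :=
  ∏ t, (C (b t) + ∑ l, C (E l t) * X l) ^ α t

lemma totalDegree_affMonomial_le {n m : ℕ} (b : Fin n → ℝ) (E : Fin m → Fin n → ℝ)
    (α : Fin n → ℕ) : (affMonomial m b E α).totalDegree ≤ ∑ t, α t := by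
  refine (totalDegree_finset_prod _ _).trans (Finset.sum_le_sum fun t _ => ?_)
  refine (totalDegree_pow _ _).trans ?_
  have h1 : (C (b t) + ∑ l, C (E l t) * X l : MvPolynomial (Fin m) ℝ).totalDegree ≤ 1 := by
    refine (totalDegree_add _ _).trans (max_le ?_ ?_)
    · simp [totalDegree_C]
    · refine totalDegree_finsetSum_le fun l _ => ?_
      refine (totalDegree_mul _ _).trans ?_
      simp [totalDegree_C, totalDegree_X]
  calc (α t) * (C (b t) + ∑ l, C (E l t) * X l : MvPolynomial (Fin m) ℝ).totalDegree
      ≤ α t * 1 := Nat.mul_le_mul_left _ h1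
    _ = α t := Nat.mul_one _

lemma eval_affMonomial {n m : ℕ} (b : Fin n → ℝ) (E : Fin m → Fin n → ℝ)
    (α : Fin n → ℕ) (c : Fin m → ℝ) :
    eval c (affMonomial m b E α) = ∏ t, (b t + ∑ l, c l * E l t) ^ α t := by
  simp [affMonomial, mul_comm]

/-- The spanning family for one affine subspace. -/
noncomputable def affFam {n : ℕ} (m d : ℕ) (b : Fin n → ℝ) (E : Fin m → Fin n → ℝ)
    (β : {β : Fin m → ℕ // ∑ i, β i ≤ d}) : {α : Fin n → ℕ // ∑ i, α i ≤ d} → ℝ :=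
  fun α => coeff (Finsupp.equivFunOnFinite.symm β.1) (affMonomial m b E α.1)

lemma mem_span_affFam {n : ℕ} (m d : ℕ) (b : Fin n → ℝ) (E : Fin m → Fin n → ℝ)
    (c : Fin m → ℝ) :
    (fun α : {α : Fin n → ℕ // ∑ i, α i ≤ d} => ∏ t, (b t + ∑ l, c l * E l t) ^ α.1 t)
      ∈ span ℝ (Set.range (affFam m d b E)) := by
  classical
  have key : (fun α : {α : Fin n → ℕ // ∑ i, α i ≤ d} =>
        ∏ t, (b t + ∑ l, c l * E l t) ^ α.1 t)
      = ∑ β : {β : Fin m → ℕ // ∑ i, β i ≤ d},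
          (∏ l, c l ^ β.1 l) • affFam m d b E β := by
    funext α
    have hev := (eval_affMonomial b E α.1 c).symm
    rw [Finset.sum_apply, hev, eval_eq']
    set e : {β : Fin m → ℕ // ∑ i, β i ≤ d} → (Fin m →₀ ℕ) :=
      fun β => Finsupp.equivFunOnFinite.symm β.1 with he_def
    have he : Function.Injective e :=
      Finsupp.equivFunOnFinite.symm.injective.comp Subtype.val_injective
    have hsub : (affMonomial m b E α.1).support ⊆ Finset.univ.image e := by
      intro γ hγ
      have h1 : (γ.sum fun _ k => k) ≤ (affMonomial m b E α.1).totalDegree :=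
        le_totalDegree hγ
      have h2 : (γ.sum fun _ k => k) = ∑ i, γ i := Finsupp.sum_fintype _ _ (fun _ => rfl)
      have h3 : ∑ i, γ i ≤ d := by
        have h4 := totalDegree_affMonomial_le b E α.1
        have h5 := α.2
        omega
      refine Finset.mem_image.2 ⟨⟨γ, h3⟩, Finset.mem_univ _, ?_⟩
      simp [he_def]
    rw [Finset.sum_subset hsub (fun γ _ hγ => by
      simp [MvPolynomial.notMem_support_iff.mp hγ])]
    rw [Finset.sum_image (fun a _ b _ h => he h)]
    refine Finset.sum_congr rfl fun β _ => ?_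
    simp only [Pi.smul_apply, smul_eq_mul, affFam, he_def]
    rw [mul_comm]
    simp
  rw [key]
  exact sum_mem fun β _ => smul_mem _ _ (subset_span (Set.mem_range_self β))

lemma finrank_finsetSup_le {ι M : Type*} [AddCommGroup M] [Module ℝ M]
    (f : ι → Submodule ℝ M) (hf : ∀ i, FiniteDimensional ℝ (f i)) (s : Finset ι) :
    FiniteDimensional ℝ ↥(s.sup f) ∧
      finrank ℝ ↥(s.sup f) ≤ ∑ i ∈ s, finrank ℝ ↥(f i) := by
  classical
  induction s using Finset.induction_on with
  | empty =>
    refine ⟨?_, ?_⟩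
    · rw [Finset.sup_empty]; infer_instance
    · simp
  | @insert a s hne ih =>
    obtain ⟨ihf, ihle⟩ := ih
    haveI := ihf; haveI := hf a
    rw [Finset.sup_insert, Finset.sum_insert hne]
    refine ⟨inferInstance, ?_⟩
    exact (Submodule.finrank_add_le_finrank_add_finrank _ _).trans (Nat.add_le_add_left ihle _)

/-- If the columns of `X ∈ ℝ^{n×s}` belong to a union of `k` affine subspaces
(translates `b i + W i` of linear subspaces `W i`), each of dimension at most `r`, then
for all `d ≥ 1`: `rank φ_d(X) ≤ k * (r+d).choose d`. -/
theorem rank_phiMatrix_le_of_union_affine (n s d k r : ℕ) (hd : 1 ≤ d)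
    (W : Fin k → Submodule ℝ (Fin n → ℝ)) (hW : ∀ i, Module.finrank ℝ (W i) ≤ r)
    (b : Fin k → Fin n → ℝ) (X : Matrix (Fin n) (Fin s) ℝ)
    (hX : ∀ j, ∃ i, ∃ w ∈ W i, (fun t => X t j) = w + b i) :
    (phiMatrix d X).rank ≤ k * (r + d).choose d := by
  classical
  rw [Matrix.rank_eq_finrank_span_cols]
  -- basis data for each subspace
  set m : Fin k → ℕ := fun i => finrank ℝ (W i) with hm
  let e : ∀ i, Basis (Fin (m i)) ℝ (W i) := fun i => Module.finBasis ℝ (W i)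
  let E : ∀ i, Fin (m i) → (Fin n → ℝ) := fun i l => ((e i l : W i) : Fin n → ℝ)
  let V : Fin k → Submodule ℝ ({α : Fin n → ℕ // ∑ i, α i ≤ d} → ℝ) :=
    fun i => span ℝ (Set.range (affFam (m i) d (b i) (E i)))
  have hVfd : ∀ i, FiniteDimensional ℝ (V i) :=
    fun i => FiniteDimensional.span_of_finite ℝ (Set.finite_range _)
  obtain ⟨hfd, hle⟩ := finrank_finsetSup_le V hVfd Finset.univ
  have hcol : span ℝ (Set.range (phiMatrix d X)ᵀ) ≤ Finset.univ.sup V := by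
    rw [span_le]
    rintro _ ⟨j, rfl⟩
    obtain ⟨i, w, hw, hwe⟩ := hX j
    set c : Fin (m i) → ℝ := fun l => (e i).repr ⟨w, hw⟩ l with hc
    have h1 : w = ∑ l, c l • E i l := by
      have h2 : (⟨w, hw⟩ : W i) = ∑ l, c l • e i l := ((e i).sum_repr ⟨w, hw⟩).symm
      have h3 := congrArg (fun x : W i => (x : Fin n → ℝ)) h2
      simpa [E] using h3
    have hXw : ∀ t, X t j = b i t + ∑ l, c l * E i l t := by
      intro t
      have h3 : X t j = w t + b i t := congrFun hwe t
      have h4 : w t = ∑ l, c l * E i l t := by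
        rw [congrFun h1 t]
        simp [Finset.sum_apply]
      rw [h3, h4, add_comm]
    have hcoleq : (phiMatrix d X)ᵀ j
        = fun α : {α : Fin n → ℕ // ∑ i, α i ≤ d} =>
            ∏ t, (b i t + ∑ l, c l * E i l t) ^ α.1 t := by
      funext α
      simp only [Matrix.transpose_apply, phiMatrix, Matrix.of_apply]
      exact Finset.prod_congr rfl fun t _ => by rw [hXw t]
    have hmem : (phiMatrix d X)ᵀ j ∈ V i := by
      rw [hcoleq]
      exact mem_span_affFam (m i) d (b i) (E i) c
    exact SetLike.mem_coe.2 (SetLike.le_def.mp (Finset.le_sup (Finset.mem_univ i)) hmem)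
  have hVle : ∀ i, finrank ℝ (V i) ≤ (r + d).choose d := by
    intro i
    have h1 : finrank ℝ (V i) ≤ Fintype.card {β : Fin (m i) → ℕ // ∑ t, β t ≤ d} :=
      finrank_range_le_card _
    rw [card_sumLE] at h1
    exact h1.trans (Nat.choose_le_choose d (Nat.add_le_add_right (hW i) d))
  calc finrank ℝ ↥(span ℝ (Set.range (phiMatrix d X)ᵀ))
      ≤ finrank ℝ ↥(Finset.univ.sup V) := Submodule.finrank_mono hcol
    _ ≤ ∑ i, finrank ℝ ↥(V i) := hle
    _ ≤ ∑ _i : Fin k, (r + d).choose d := Finset.sum_le_sum fun i _ => hVle i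
    _ = k * (r + d).choose d := by simp [Finset.sum_const, Finset.card_univ]
end
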